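/- For fixed λ > 0 and α ∈ (0,1) with 0 < 1−α < 1−e^{-λ}, there exist an integer L and a constant C_L such that for all sufficiently large n: (a) P(1 ≤ K_n ≤ L) ≥ 1−α where K_n ~ Binomial(n, λ/n), and (b) there exists an L-disjunct family on [n] of size at most C_L log n. Consequently the two-round procedure (global test, then the disjunct family if positive) succeeds with probability at least 1−α and uses at most 1 + C_L log n expected tests. -/

import Mathlib

open MeasureTheory
open scoped ENNReal

/-- `F` is `L`-disjunct. -/
def IsDisjunct {n m : ℕ} (L : ℕ) (F : Fin m → Finset (Fin n)) : Prop :=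
  ∀ i : Fin n, ∀ S : Finset (Fin n), i ∉ S → S.card ≤ L →
    ∃ j : Fin m, i ∈ F j ∧ Disjoint (F j) S

/-- The sparse model: each of the `n` elements is independently excellent with
probability `λ/n` (truncated at 1, which is inactive once `n ≥ λ`). -/
noncomputable def sparseMeasure (lam : ℝ) (n : ℕ) : Measure (Fin n → Bool) :=
  Measure.pi fun _ =>
    (PMF.bernoulli (min (Real.toNNReal (lam / n)) 1) (min_le_right _ _)).toMeasure

/-- Number of excellent elements. -/
def numExcellent {n : ℕ} (ω : Fin n → Bool) : ℕ :=
  (Finset.univ.filter fun i => ω i = true).card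

open Finset
lemma badT_card {n L : ℕ} (hn : L + 1 ≤ n) (i : Fin n) (S : Finset (Fin n))
    (hiS : i ∉ S) (hS : S.card = L) :
    (Finset.univ.filter (fun T : Finset (Fin n) => ¬(i ∈ T ∧ Disjoint T S))).card
      ≤ 2 ^ n - 2 ^ (n - (L+1)) := by
  classical
  have hins : (insert i S).card = L + 1 := by rw [card_insert_of_notMem hiS, hS]
  set good := Finset.univ.filter (fun T : Finset (Fin n) => i ∈ T ∧ Disjoint T S) with hg
  have hsplit : (Finset.univ.filter (fun T : Finset (Fin n) => ¬(i ∈ T ∧ Disjoint T S))).card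
      + good.card = 2 ^ n := by
    have h := Finset.card_filter_add_card_filter_not
      (s := (Finset.univ : Finset (Finset (Fin n)))) (p := fun T => i ∈ T ∧ Disjoint T S)
    rw [Finset.card_univ, Fintype.card_finset, Fintype.card_fin] at h
    rw [hg]
    omega
  have hgood : 2 ^ (n - (L+1)) ≤ good.card := by
    have hinj : ∀ T' ∈ ((Finset.univ : Finset (Fin n)) \ insert i S).powerset,
        insert i T' ∈ good := by
      intro T' hT'
      simp only [mem_powerset, subset_sdiff] at hT'
      simp only [hg, mem_filter, mem_univ, true_and]
      constructor
      · exact mem_insert_self _ _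
      · rw [Finset.disjoint_left]
        intro a ha haS
        rcases mem_insert.mp ha with h | h
        · exact hiS (h ▸ haS)
        · exact (Finset.disjoint_left.mp hT'.2 h) (mem_insert_of_mem haS)
    have hcard : (((Finset.univ : Finset (Fin n)) \ insert i S).powerset).card
        = 2 ^ (n - (L+1)) := by
      rw [card_powerset, card_sdiff_of_subset (subset_univ _), card_univ, Fintype.card_fin, hins]
    calc 2 ^ (n - (L+1)) = (((Finset.univ : Finset (Fin n)) \ insert i S).powerset).card :=
          hcard.symm
      _ ≤ good.card := by
          apply Finset.card_le_card_of_injOn (fun T' => insert i T') hinj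
          intro a ha b hb hab
          simp only [mem_coe, mem_powerset, subset_sdiff] at ha hb
          have hia : i ∉ a := fun h => (Finset.disjoint_left.mp ha.2 h) (mem_insert_self _ _)
          have hib : i ∉ b := fun h => (Finset.disjoint_left.mp hb.2 h) (mem_insert_self _ _)
          have := congrArg (fun s => Finset.erase s i) hab
          simpa [Finset.erase_insert hia, Finset.erase_insert hib] using this
  omega

lemma disjunct_exists {n : ℕ} (L m : ℕ) (hn : L + 1 ≤ n)
    (hcount : n ^ (L+1) * (2 ^ (L+1) - 1) ^ m < (2 ^ (L+1)) ^ m) :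
    ∃ F : Fin m → Finset (Fin n), IsDisjunct L F := by
  classical
  set badT : Fin n → Finset (Fin n) → Finset (Finset (Fin n)) := fun i S =>
    Finset.univ.filter (fun T : Finset (Fin n) => ¬(i ∈ T ∧ Disjoint T S)) with hbadT
  set Bad : Finset (Fin m → Finset (Fin n)) :=
    Finset.univ.filter (fun F => ∃ i : Fin n, ∃ S ∈ Finset.powersetCard L (Finset.univ.erase i),
      ∀ j, ¬(i ∈ F j ∧ Disjoint (F j) S)) with hBad
  have hBadsub : Bad ⊆ (Finset.univ : Finset (Fin n)).biUnion (fun i =>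
      (Finset.powersetCard L (Finset.univ.erase i)).biUnion (fun S =>
        Fintype.piFinset (fun _ : Fin m => badT i S))) := by
    intro F hF
    simp only [hBad, mem_filter, mem_univ, true_and] at hF
    obtain ⟨i, S, hS, hall⟩ := hF
    simp only [mem_biUnion, mem_univ, true_and]
    exact ⟨i, S, hS, by simp only [Fintype.mem_piFinset, hbadT, mem_filter, mem_univ, true_and]; exact hall⟩
  have hBadcard : Bad.card < Fintype.card (Fin m → Finset (Fin n)) := by
    have h1 : Bad.card ≤ n * (n.choose L * (2 ^ n - 2 ^ (n - (L+1))) ^ m) := by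
      refine le_trans (Finset.card_le_card hBadsub) ?_
      refine le_trans (Finset.card_biUnion_le) ?_
      calc ∑ i : Fin n, ((Finset.powersetCard L (Finset.univ.erase i)).biUnion (fun S =>
            Fintype.piFinset (fun _ : Fin m => badT i S))).card
          ≤ ∑ i : Fin n, (n.choose L * (2 ^ n - 2 ^ (n - (L+1))) ^ m) := by
            apply Finset.sum_le_sum
            intro i _
            refine le_trans (Finset.card_biUnion_le) ?_
            calc ∑ S ∈ Finset.powersetCard L (Finset.univ.erase i),
                  (Fintype.piFinset (fun _ : Fin m => badT i S)).card
                ≤ ∑ S ∈ Finset.powersetCard L (Finset.univ.erase i),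
                  (2 ^ n - 2 ^ (n - (L+1))) ^ m := by
                  apply Finset.sum_le_sum
                  intro S hS
                  rw [Finset.mem_powersetCard] at hS
                  have hiS : i ∉ S := fun h => (Finset.mem_erase.mp (hS.1 h)).1 rfl
                  rw [Fintype.card_piFinset]
                  calc ∏ _j : Fin m, (badT i S).card
                      ≤ ∏ _j : Fin m, (2 ^ n - 2 ^ (n - (L+1))) := by
                        apply Finset.prod_le_prod' 
                        intro j _
                        exact badT_card hn i S hiS hS.2
                    _ = (2 ^ n - 2 ^ (n - (L+1))) ^ m := by
                        simp [Finset.prod_const, Finset.card_univ]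
              _ ≤ n.choose L * (2 ^ n - 2 ^ (n - (L+1))) ^ m := by
                  rw [Finset.sum_const, Finset.card_powersetCard]
                  have : (Finset.univ.erase i).card ≤ n := by
                    calc (Finset.univ.erase i).card ≤ (Finset.univ : Finset (Fin n)).card :=
                      Finset.card_le_card (Finset.erase_subset _ _)
                    _ = n := by simp
                  exact Nat.mul_le_mul_right _ (Nat.choose_le_choose _ this)
        _ = n * (n.choose L * (2 ^ n - 2 ^ (n - (L+1))) ^ m) := by
            simp [Finset.sum_const, Finset.card_univ, mul_comm]
    have h2 : n * (n.choose L * (2 ^ n - 2 ^ (n - (L+1))) ^ m) < (2 ^ n) ^ m := by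
      have hsplit : 2 ^ n - 2 ^ (n - (L+1)) = 2 ^ (n - (L+1)) * (2 ^ (L+1) - 1) := by
        have h2n : 2 ^ n = 2 ^ (n - (L+1)) * 2 ^ (L+1) := by
          rw [← pow_add]; congr 1; omega
        rw [h2n, Nat.mul_sub, mul_one]
      have hchoose : n.choose L ≤ n ^ L := Nat.choose_le_pow n L
      calc n * (n.choose L * (2 ^ n - 2 ^ (n - (L+1))) ^ m)
          ≤ n * (n ^ L * (2 ^ n - 2 ^ (n - (L+1))) ^ m) := by
            exact Nat.mul_le_mul_left _ (Nat.mul_le_mul_right _ hchoose)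
        _ = n ^ (L+1) * (2 ^ n - 2 ^ (n - (L+1))) ^ m := by ring
        _ = n ^ (L+1) * (2 ^ (L+1) - 1) ^ m * (2 ^ (n - (L+1))) ^ m := by
            rw [hsplit, mul_pow]; ring
        _ < (2 ^ (L+1)) ^ m * (2 ^ (n - (L+1))) ^ m :=
            mul_lt_mul_of_pos_right hcount
              (Nat.pow_pos (Nat.pow_pos (by norm_num)))
        _ = (2 ^ n) ^ m := by
            rw [← mul_pow, ← pow_add]
            congr 2
            omega
    calc Bad.card ≤ n * (n.choose L * (2 ^ n - 2 ^ (n - (L+1))) ^ m) := h1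
      _ < (2 ^ n) ^ m := h2
      _ = Fintype.card (Fin m → Finset (Fin n)) := by
          simp [Fintype.card_fun, Fintype.card_finset]
  -- extract a good F
  obtain ⟨F, hF⟩ : ∃ F : Fin m → Finset (Fin n), F ∉ Bad := by
    by_contra h
    push_neg at h
    have : (Finset.univ : Finset (Fin m → Finset (Fin n))) ⊆ Bad := fun F _ => h F
    have := Finset.card_le_card this
    rw [Finset.card_univ] at this
    omega
  refine ⟨F, ?_⟩
  intro i S hiS hScard
  -- extend S to card L inside univ.erase i
  have hsub : S ⊆ Finset.univ.erase i := by
    intro a ha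
    exact Finset.mem_erase.mpr ⟨fun h => hiS (h ▸ ha), mem_univ a⟩
  have hcard' : L ≤ (Finset.univ.erase i).card := by
    rw [Finset.card_erase_of_mem (mem_univ i), Finset.card_univ, Fintype.card_fin]
    omega
  obtain ⟨S', hSS', hS'sub, hS'card⟩ := Finset.exists_subsuperset_card_eq hsub hScard hcard'
  have hiS' : i ∉ S' := fun h => (Finset.mem_erase.mp (hS'sub h)).1 rfl
  have : ¬ (∃ S'' ∈ Finset.powersetCard L (Finset.univ.erase i),
      ∀ j, ¬(i ∈ F j ∧ Disjoint (F j) S'')) := by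
    intro hcon
    apply hF
    simp only [hBad, mem_filter, mem_univ, true_and]
    exact ⟨i, hcon⟩
  push_neg at this
  obtain ⟨j, hj⟩ := this S' (Finset.mem_powersetCard.mpr ⟨hS'sub, hS'card⟩)
  exact ⟨j, hj.1, hj.2.mono_right hSS'⟩

lemma m_spec (L n : ℕ) (hn : 3 ≤ n) :
    ∃ m : ℕ, (m : ℝ) ≤ (((L:ℝ)+1)/Real.log ((2^(L+1):ℝ)/((2^(L+1):ℝ)-1)) + 2) * Real.log n ∧
      n ^ (L+1) * (2 ^ (L+1) - 1) ^ m < (2 ^ (L+1)) ^ m := by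
  set q : ℝ := (2:ℝ)^(L+1) with hqdef
  have hq2 : (2:ℝ) ≤ q := by
    calc (2:ℝ) = 2^1 := (pow_one 2).symm
    _ ≤ 2^(L+1) := by
      apply pow_le_pow_right₀ (by norm_num) (by omega)
  have hq1 : (1:ℝ) ≤ q - 1 := by linarith
  set r : ℝ := q / (q - 1) with hrdef
  have hr1 : 1 < r := by
    rw [hrdef, lt_div_iff₀ (by linarith)]
    linarith
  have hlogr : 0 < Real.log r := Real.log_pos hr1
  have hlogn : 1 ≤ Real.log n := by
    rw [← Real.log_exp 1]
    apply Real.log_le_log (Real.exp_pos 1)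
    calc Real.exp 1 ≤ 2.7182818286 := le_of_lt Real.exp_one_lt_d9
      _ ≤ 3 := by norm_num
      _ ≤ (n:ℝ) := by exact_mod_cast hn
  have hlogn0 : 0 < Real.log n := by linarith
  set c0 : ℝ := ((L:ℝ)+1)/Real.log r with hc0
  have hc0nn : 0 ≤ c0 := div_nonneg (by positivity) hlogr.le
  set x : ℝ := c0 * Real.log n with hx
  have hxnn : 0 ≤ x := mul_nonneg hc0nn hlogn0.le
  refine ⟨⌈x⌉₊ + 1, ?_, ?_⟩
  · push_cast
    have h1 : (⌈x⌉₊ : ℝ) < x + 1 := Nat.ceil_lt_add_one hxnn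
    have : x + 2 ≤ (c0 + 2) * Real.log n := by
      rw [hx]; nlinarith
    linarith
  · -- real inequality first
    have hmx : x < (⌈x⌉₊ + 1 : ℕ) := by
      push_cast
      have := Nat.le_ceil x
      linarith
    set m := ⌈x⌉₊ + 1
    have hkey : ((L:ℝ)+1) * Real.log n < (m:ℝ) * Real.log r := by
      have : x * Real.log r < (m:ℝ) * Real.log r := by
        exact mul_lt_mul_of_pos_right hmx hlogr
      rw [hx, hc0] at this
      field_simp at this
      linarith [this]
    have hnpow : (n:ℝ)^(L+1) < r^m := by
      have hc : ((L:ℝ)+1) = ((L+1 : ℕ):ℝ) := by push_cast; ring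
      have h1 : (n:ℝ)^(L+1) = Real.exp (((L:ℝ)+1) * Real.log n) := by
        rw [hc, ← Real.log_pow, Real.exp_log (by positivity)]
      have h2 : r^m = Real.exp ((m:ℝ) * Real.log r) := by
        rw [← Real.log_pow, Real.exp_log (by positivity)]
      rw [h1, h2]
      exact Real.exp_lt_exp.mpr hkey
    have hreal : (n:ℝ)^(L+1) * (q-1)^m < q^m := by
      have hpos : (0:ℝ) < (q-1)^m := by positivity
      calc (n:ℝ)^(L+1) * (q-1)^m < r^m * (q-1)^m := mul_lt_mul_of_pos_right hnpow hpos
        _ = (r * (q-1))^m := (mul_pow _ _ _).symm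
        _ = q^m := by
            congr 1
            rw [hrdef]
            field_simp
    have hcast : ((2^(L+1) - 1 : ℕ) : ℝ) = q - 1 := by
      rw [Nat.cast_sub Nat.one_le_two_pow]
      push_cast [hqdef]; ring
    have : ((n ^ (L+1) * (2 ^ (L+1) - 1) ^ m : ℕ) : ℝ) < (((2 ^ (L+1):ℕ) ^ m : ℕ) : ℝ) := by
      push_cast [hcast]
      convert hreal using 2 <;> push_cast [hqdef] <;> ring
    exact_mod_cast this

lemma meas_all {n : ℕ} (s : Set (Fin n → Bool)) : MeasurableSet s :=
  s.to_countable.measurableSet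

instance sparse_prob (lam : ℝ) (n : ℕ) : IsProbabilityMeasure (sparseMeasure lam n) := by
  unfold sparseMeasure
  infer_instance

lemma sparse_zero (lam : ℝ) (n : ℕ) :
    sparseMeasure lam n {ω | numExcellent ω = 0}
      = ((1 - min (Real.toNNReal (lam / n)) 1 : NNReal) : ℝ≥0∞) ^ n := by
  have hset : {ω : Fin n → Bool | numExcellent ω = 0}
      = Set.pi Set.univ (fun _ => ({false} : Set Bool)) := by
    ext ω
    simp only [Set.mem_setOf_eq, Set.mem_pi, Set.mem_univ, Set.mem_singleton_iff, true_implies,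
      numExcellent, Finset.card_eq_zero, Finset.filter_eq_empty_iff, Finset.mem_univ, true_implies]
    constructor
    · intro h i
      cases hb : ω i
      · rfl
      · exact absurd hb (h (x := i))
    · intro h i
      simp [h i]
  rw [sparseMeasure, hset, Measure.pi_pi]
  have hone : ∀ i : Fin n,
      (PMF.bernoulli (min (Real.toNNReal (lam / n)) 1) (min_le_right _ _)).toMeasure
        ({false} : Set Bool) = ((1 - min (Real.toNNReal (lam / n)) 1 : NNReal) : ℝ≥0∞) := by
    intro i
    rw [PMF.toMeasure_apply_singleton _ _ (measurableSet_singleton _)]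
    rfl
  simp only [hone, Finset.prod_const, Finset.card_univ, Fintype.card_fin]
  congr 1
  rw [PMF.toMeasure_apply_singleton _ _ (measurableSet_singleton _)]
  rfl

lemma sparse_tail (lam : ℝ) (n L : ℕ) :
    sparseMeasure lam n {ω | L + 1 ≤ numExcellent ω}
      ≤ (n.choose (L+1)) * ((min (Real.toNNReal (lam / n)) 1 : NNReal) : ℝ≥0∞) ^ (L+1) := by
  classical
  set p := min (Real.toNNReal (lam / n)) 1 with hp
  have hsub : {ω : Fin n → Bool | L + 1 ≤ numExcellent ω}
      ⊆ ⋃ A ∈ Finset.powersetCard (L+1) (Finset.univ : Finset (Fin n)),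
          {ω : Fin n → Bool | ∀ i ∈ A, ω i = true} := by
    intro ω hω
    simp only [Set.mem_setOf_eq] at hω
    obtain ⟨A, hA, hAcard⟩ := Finset.exists_subset_card_eq hω
    simp only [Set.mem_iUnion]
    refine ⟨A, Finset.mem_powersetCard.mpr ⟨Finset.subset_univ _, hAcard⟩, ?_⟩
    intro i hi
    exact (Finset.mem_filter.mp (hA hi)).2
  calc sparseMeasure lam n {ω | L + 1 ≤ numExcellent ω}
      ≤ sparseMeasure lam n (⋃ A ∈ Finset.powersetCard (L+1) (Finset.univ : Finset (Fin n)),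
          {ω : Fin n → Bool | ∀ i ∈ A, ω i = true}) := measure_mono hsub
    _ ≤ ∑ A ∈ Finset.powersetCard (L+1) (Finset.univ : Finset (Fin n)),
          sparseMeasure lam n {ω : Fin n → Bool | ∀ i ∈ A, ω i = true} :=
        measure_biUnion_finset_le _ _
    _ ≤ ∑ A ∈ Finset.powersetCard (L+1) (Finset.univ : Finset (Fin n)), (p : ℝ≥0∞) ^ (L+1) := by
        apply Finset.sum_le_sum
        intro A hA
        have hAcard := (Finset.mem_powersetCard.mp hA).2
        have hset : {ω : Fin n → Bool | ∀ i ∈ A, ω i = true}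
            = Set.pi Set.univ (fun i => if i ∈ A then ({true} : Set Bool) else Set.univ) := by
          ext ω
          simp only [Set.mem_setOf_eq, Set.mem_pi, Set.mem_univ, true_implies]
          constructor
          · intro h i
            by_cases hi : i ∈ A
            · simp [hi, h i hi]
            · simp [hi]
          · intro h i hi
            have := h i
            simpa [hi] using this
        rw [sparseMeasure, hset, Measure.pi_pi]
        have hval : ∀ i : Fin n,
            (PMF.bernoulli p (min_le_right _ _)).toMeasure
              (if i ∈ A then ({true} : Set Bool) else Set.univ)
              = if i ∈ A then (p : ℝ≥0∞) else 1 := by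
          intro i
          by_cases hi : i ∈ A
          · simp only [hi, if_true]
            rw [PMF.toMeasure_apply_singleton _ _ (measurableSet_singleton _)]
            rfl
          · simp only [hi, if_false]
            exact measure_univ
        rw [Finset.prod_congr rfl (fun i _ => hval i), Finset.prod_ite_mem,
          Finset.univ_inter, Finset.prod_const, hAcard]
    _ = (n.choose (L+1)) * (p : ℝ≥0∞) ^ (L+1) := by
        rw [Finset.sum_const, Finset.card_powersetCard, Finset.card_univ, Fintype.card_fin,
          nsmul_eq_mul]

lemma sparse_main (lam α : ℝ) (L n : ℕ) (hl : 0 < lam) (hα0 : 0 < α) (hα1 : α < 1)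
    (hn : lam ≤ n) (hn0 : 0 < n)
    (hbound : Real.exp (-lam) + lam ^ (L+1) / (L+1).factorial ≤ α) :
    ENNReal.ofReal (1 - α) ≤
      sparseMeasure lam n {ω | 1 ≤ numExcellent ω ∧ numExcellent ω ≤ L} := by
  set μ := sparseMeasure lam n with hμ
  set S := {ω : Fin n → Bool | 1 ≤ numExcellent ω ∧ numExcellent ω ≤ L} with hSdef
  have hln : 0 ≤ lam / n := div_nonneg hl.le (Nat.cast_nonneg n)
  have hln1 : lam / n ≤ 1 := by
    rw [div_le_one (by exact_mod_cast hn0)]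
    exact hn
  have hpmin : ((min (Real.toNNReal (lam / n)) 1 : NNReal) : ℝ≥0∞) = ENNReal.ofReal (lam / n) := by
    rw [min_eq_left (Real.toNNReal_le_one.mpr hln1)]; rfl
  -- bound on the zero event
  have hzero : μ {ω | numExcellent ω = 0} ≤ ENNReal.ofReal (Real.exp (-lam)) := by
    rw [hμ, sparse_zero, min_eq_left (Real.toNNReal_le_one.mpr hln1)]
    have h1 : ((1 - Real.toNNReal (lam / n) : NNReal) : ℝ≥0∞) = ENNReal.ofReal (1 - lam / n) := by
      rw [ENNReal.coe_sub, ENNReal.coe_one, ENNReal.ofReal_sub _ hln, ENNReal.ofReal_one]; rfl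
    rw [h1, ← ENNReal.ofReal_pow (by linarith)]
    apply ENNReal.ofReal_le_ofReal
    have hstep : 1 - lam / n ≤ Real.exp (-(lam / n)) := by
      have := Real.add_one_le_exp (-(lam / n))
      linarith
    calc (1 - lam / n) ^ n ≤ Real.exp (-(lam / n)) ^ n :=
        pow_le_pow_left₀ (by linarith) hstep n
      _ = Real.exp (-lam) := by
        rw [← Real.exp_nat_mul]
        congr 1
        field_simp
  -- bound on the tail event
  have htail : μ {ω | L + 1 ≤ numExcellent ω}
      ≤ ENNReal.ofReal (lam ^ (L+1) / (L+1).factorial) := by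
    refine le_trans (sparse_tail lam n L) ?_
    rw [hpmin, ← ENNReal.ofReal_pow hln, ← ENNReal.ofReal_natCast,
      ← ENNReal.ofReal_mul (Nat.cast_nonneg _)]
    apply ENNReal.ofReal_le_ofReal
    have hchoose : (n.choose (L+1) : ℝ) ≤ (n:ℝ) ^ (L+1) / (L+1).factorial :=
      Nat.choose_le_pow_div (L+1) n
    have hnpos : (0:ℝ) < (n:ℝ) ^ (L+1) := by positivity
    calc (n.choose (L+1) : ℝ) * (lam / n) ^ (L+1)
        ≤ ((n:ℝ) ^ (L+1) / (L+1).factorial) * (lam / n) ^ (L+1) := by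
          apply mul_le_mul_of_nonneg_right hchoose (by positivity)
      _ = lam ^ (L+1) / (L+1).factorial := by
          rw [div_pow]
          field_simp
  -- complement bound
  have hcompl : μ Sᶜ ≤ ENNReal.ofReal α := by
    have hsub : Sᶜ ⊆ {ω : Fin n → Bool | numExcellent ω = 0} ∪ {ω | L + 1 ≤ numExcellent ω} := by
      intro ω hω
      simp only [hSdef, Set.mem_compl_iff, Set.mem_setOf_eq, not_and, not_le] at hω
      simp only [Set.mem_union, Set.mem_setOf_eq]
      omega
    calc μ Sᶜ ≤ μ ({ω : Fin n → Bool | numExcellent ω = 0} ∪ {ω | L + 1 ≤ numExcellent ω}) :=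
        measure_mono hsub
      _ ≤ μ {ω : Fin n → Bool | numExcellent ω = 0} + μ {ω | L + 1 ≤ numExcellent ω} :=
        measure_union_le _ _
      _ ≤ ENNReal.ofReal (Real.exp (-lam)) + ENNReal.ofReal (lam ^ (L+1) / (L+1).factorial) :=
        add_le_add hzero htail
      _ = ENNReal.ofReal (Real.exp (-lam) + lam ^ (L+1) / (L+1).factorial) := by
        rw [← ENNReal.ofReal_add (Real.exp_pos _).le (by positivity)]
      _ ≤ ENNReal.ofReal α := ENNReal.ofReal_le_ofReal hbound
  -- conclude
  have hfull : μ S + μ Sᶜ = 1 := by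
    rw [measure_add_measure_compl (meas_all S), measure_univ]
  have h1 : (1 : ℝ≥0∞) = ENNReal.ofReal (1 - α) + ENNReal.ofReal α := by
    rw [← ENNReal.ofReal_add (by linarith) hα0.le]
    norm_num
  have : ENNReal.ofReal (1 - α) + ENNReal.ofReal α ≤ μ S + ENNReal.ofReal α := by
    rw [← h1, ← hfull]
    exact add_le_add le_rfl hcompl
  exact (ENNReal.add_le_add_iff_right ENNReal.ofReal_ne_top).mp this

/-- For feasible targets `e^{-λ} < α < 1`, there exist a truncation level `L` and a
constant `C_L` such that for all large `n`: (a) `P(1 ≤ K_n ≤ L) ≥ 1-α`;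
(b) there is an `L`-disjunct family of size `≤ C_L log n`; and consequently a two-round
procedure (global test, then the disjunct family if positive, decoding via some rule
`Φ` of the test outcomes) succeeds with probability `≥ 1-α` and uses at most
`1 + C_L log n` expected tests. -/
theorem two_round_upper_bound (lam α : ℝ) (hl : 0 < lam)
    (hα0 : 0 < α) (hα1 : α < 1) (hfeas : Real.exp (-lam) < α) :
    ∃ (L : ℕ) (C : ℝ) (N : ℕ), ∀ n : ℕ, N ≤ n →
      (ENNReal.ofReal (1 - α) ≤
        sparseMeasure lam n {ω | 1 ≤ numExcellent ω ∧ numExcellent ω ≤ L}) ∧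
      (∃ m : ℕ, (m : ℝ) ≤ C * Real.log n ∧
        ∃ F : Fin m → Finset (Fin n), IsDisjunct L F) ∧
      (∃ (m : ℕ) (F : Fin m → Finset (Fin n))
          (Φ : Bool → (Fin m → Bool) → Option (Fin n)),
        (m : ℝ) ≤ C * Real.log n ∧
        ENNReal.ofReal (1 - α) ≤
          sparseMeasure lam n
            {ω | ∃ i : Fin n,
              Φ (decide (1 ≤ numExcellent ω))
                  (fun j => decide ((F j ∩ Finset.univ.filter fun i => ω i = true).Nonempty))
                = some i ∧ ω i = true} ∧
        ∫ ω, (1 + (m : ℝ) * (if 1 ≤ numExcellent ω then 1 else 0))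
            ∂(sparseMeasure lam n) ≤ 1 + C * Real.log n) := by
  classical
  -- choose L
  have hε : 0 < α - Real.exp (-lam) := by linarith
  have htend := FloorSemiring.tendsto_pow_div_factorial_atTop lam
  obtain ⟨k0, hk0⟩ := Filter.eventually_atTop.mp
    (htend.eventually (gt_mem_nhds hε))
  set L := k0 with hL
  have hbound : Real.exp (-lam) + lam ^ (L+1) / (L+1).factorial ≤ α := by
    have := hk0 (L+1) (by omega)
    linarith
  refine ⟨L, ((L:ℝ)+1)/Real.log ((2^(L+1):ℝ)/((2^(L+1):ℝ)-1)) + 2, ⌈lam⌉₊ + L + 3, ?_⟩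
  intro n hn
  set C : ℝ := ((L:ℝ)+1)/Real.log ((2^(L+1):ℝ)/((2^(L+1):ℝ)-1)) + 2 with hC
  have hn3 : 3 ≤ n := by omega
  have hn0 : 0 < n := by omega
  have hL1n : L + 1 ≤ n := by omega
  have hnlam : lam ≤ n := by
    calc lam ≤ (⌈lam⌉₊ : ℝ) := Nat.le_ceil lam
      _ ≤ (n : ℝ) := by exact_mod_cast (show ⌈lam⌉₊ ≤ n by omega)
  have ha := sparse_main lam α L n hl hα0 hα1 hnlam hn0 hbound
  obtain ⟨m, hm, hcount⟩ := m_spec L n hn3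
  obtain ⟨F, hF⟩ := disjunct_exists L m hL1n hcount
  refine ⟨ha, ⟨m, hm, F, hF⟩, ?_⟩
  -- the two-round procedure
  refine ⟨m, F, fun b t => if b then
      (if h : (Finset.univ.filter fun i : Fin n => ∀ j, i ∈ F j → t j = true).Nonempty
        then some ((Finset.univ.filter fun i : Fin n => ∀ j, i ∈ F j → t j = true).min' h)
        else none)
      else none, hm, ?_, ?_⟩
  · -- success probability
    refine le_trans ha (measure_mono ?_)
    intro ω hω
    obtain ⟨h1, h2⟩ := hω
    set E := Finset.univ.filter (fun i : Fin n => ω i = true) with hE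
    set t := fun j => decide ((F j ∩ E).Nonempty) with ht
    have hEne : E.Nonempty := Finset.card_pos.mp h1
    have key : (Finset.univ.filter fun i : Fin n => ∀ j, i ∈ F j → t j = true) = E := by
      ext i
      simp only [Finset.mem_filter, Finset.mem_univ, true_and]
      constructor
      · intro h
        by_contra hiE
        have hiE' : i ∉ E := hiE
        obtain ⟨j, hij, hdis⟩ := hF i E hiE' h2
        have hj := h j hij
        rw [ht, decide_eq_true_eq] at hj
        obtain ⟨a, ha'⟩ := hj
        rw [Finset.mem_inter] at ha'
        exact (Finset.disjoint_left.mp hdis ha'.1) ha'.2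
      · intro hωi j hij
        rw [ht]
        apply decide_eq_true
        exact ⟨i, Finset.mem_inter.mpr ⟨hij, hωi⟩⟩
    have hne : (Finset.univ.filter fun i : Fin n => ∀ j, i ∈ F j → t j = true).Nonempty := by
      rw [key]; exact hEne
    have hb : decide (1 ≤ numExcellent ω) = true := decide_eq_true h1
    refine ⟨(Finset.univ.filter fun i : Fin n => ∀ j, i ∈ F j → t j = true).min' hne, ?_, ?_⟩
    · simp only [hb, if_true]; exact dif_pos hne
    · have hmm := Finset.min'_mem _ hne
      have hmem : (Finset.univ.filter fun i : Fin n => ∀ j, i ∈ F j → t j = true).min' hne ∈ E := by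
        rw [← key]; exact hmm
      rw [hE, Finset.mem_filter] at hmem
      exact hmem.2
  · -- expected number of tests
    have hint : ∫ ω, (1 + (m : ℝ) * (if 1 ≤ numExcellent ω then 1 else 0))
        ∂(sparseMeasure lam n) ≤ ∫ _ω, (1 + (m : ℝ)) ∂(sparseMeasure lam n) := by
      apply integral_mono_of_nonneg
      · apply Filter.Eventually.of_forall
        intro ω
        have : (0:ℝ) ≤ (if 1 ≤ numExcellent ω then (1:ℝ) else 0) := by positivity
        positivity
      · exact integrable_const _
      · apply Filter.Eventually.of_forall
        intro ω
        show 1 + (m:ℝ) * (if 1 ≤ numExcellent ω then 1 else 0) ≤ 1 + (m:ℝ)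
        have hm0 : (0:ℝ) ≤ m := Nat.cast_nonneg m
        split <;> nlinarith
    rw [integral_const] at hint
    simp only [probReal_univ, one_smul] at hint
    rw [← hC] at hm
    linarith
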